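/- If a topological group G is functionally balanced (every bounded right uniformly continuous real function on G is left uniformly continuous) and G is dense in a topological group H, then H is functionally balanced. -/

import Mathlib

theorem functionally_balanced_of_dense_subgroup
    {H : Type*} [Group H] [TopologicalSpace H] [IsTopologicalGroup H]
    (G : Subgroup H) (hd : Dense (G : Set H))
    (hG : ∀ f : G → ℝ, (∃ C : ℝ, ∀ x : G, |f x| ≤ C) →
      (∀ ε > (0 : ℝ), ∃ V ∈ nhds (1 : G), ∀ x y : G, x * y⁻¹ ∈ V → |f x - f y| < ε) →
      (∀ ε > (0 : ℝ), ∃ V ∈ nhds (1 : G), ∀ x y : G, x⁻¹ * y ∈ V → |f x - f y| < ε)) :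
    ∀ f : H → ℝ, (∃ C : ℝ, ∀ x : H, |f x| ≤ C) →
      (∀ ε > (0 : ℝ), ∃ V ∈ nhds (1 : H), ∀ x y : H, x * y⁻¹ ∈ V → |f x - f y| < ε) →
      (∀ ε > (0 : ℝ), ∃ V ∈ nhds (1 : H), ∀ x y : H, x⁻¹ * y ∈ V → |f x - f y| < ε) := by
  intro f hb hR ε hε
  obtain ⟨C, hC⟩ := hb
  -- restriction of f to G is right uniformly continuous
  have hGr : ∀ δ > (0 : ℝ), ∃ V ∈ nhds (1 : G), ∀ x y : G,
      x * y⁻¹ ∈ V → |f x - f y| < δ := by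
    intro δ hδ
    obtain ⟨U, hU, hU'⟩ := hR δ hδ
    refine ⟨(fun g : G => (g : H)) ⁻¹' U,
      continuous_subtype_val.continuousAt.preimage_mem_nhds (by simpa using hU), ?_⟩
    intro x y hxy
    refine hU' x y ?_
    simpa [Subgroup.coe_mul, Subgroup.coe_inv] using hxy
  -- apply hG
  have hL := hG (fun g : G => f g) ⟨C, fun x => hC x⟩ hGr
  obtain ⟨V, hV, hV'⟩ := hL (ε / 4) (by linarith)
  -- extract an H-neighborhood W with coe ⁻¹' W ⊆ V
  rw [mem_nhds_subtype] at hV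
  obtain ⟨W, hW, hWV⟩ := hV
  have hW1 : W ∈ nhds (1 : H) := by simpa using hW
  -- right uniform continuity of f on H at ε/4
  obtain ⟨U₀, hU₀, hU₀'⟩ := hR (ε / 4) (by linarith)
  -- triple split of W
  obtain ⟨V₂, hV₂, hV₂'⟩ := exists_nhds_one_split hW1
  obtain ⟨V₁, hV₁, hV₁'⟩ := exists_nhds_one_split hV₂
  have h1V₁ : (1 : H) ∈ V₁ := mem_of_mem_nhds hV₁
  have hV₁sub : V₁ ⊆ V₂ := fun v hv => by simpa using hV₁' v hv 1 h1V₁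
  -- symmetric neighborhood
  set W₁ : Set H := V₁ ∩ (fun h : H => h⁻¹) ⁻¹' V₁ with hW₁def
  have hW₁ : W₁ ∈ nhds (1 : H) := by
    refine Filter.inter_mem hV₁ ?_
    exact continuous_inv.continuousAt.preimage_mem_nhds (by simpa using hV₁)
  refine ⟨W₁, hW₁, ?_⟩
  intro x y hxy
  -- find g in G close to x
  have hgx : ∃ g ∈ (G : Set H), g * x⁻¹ ∈ U₀ ∧ x⁻¹ * g ∈ W₁ := by
    have hmem : ((fun g : H => g * x⁻¹) ⁻¹' U₀ ∩ (fun g : H => x⁻¹ * g) ⁻¹' W₁)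
        ∈ nhds x := by
      refine Filter.inter_mem ?_ ?_
      · exact (continuous_mul_right x⁻¹).continuousAt.preimage_mem_nhds
          (by simpa using hU₀)
      · exact (continuous_mul_left x⁻¹).continuousAt.preimage_mem_nhds
          (by simpa using hW₁)
    have := mem_closure_iff_nhds.1 (hd x) _ hmem
    obtain ⟨g, hg1, hg2⟩ := this
    exact ⟨g, hg2, hg1.1, hg1.2⟩
  have hgy : ∃ g ∈ (G : Set H), g * y⁻¹ ∈ U₀ ∧ y⁻¹ * g ∈ W₁ := by
    have hmem : ((fun g : H => g * y⁻¹) ⁻¹' U₀ ∩ (fun g : H => y⁻¹ * g) ⁻¹' W₁)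
        ∈ nhds y := by
      refine Filter.inter_mem ?_ ?_
      · exact (continuous_mul_right y⁻¹).continuousAt.preimage_mem_nhds
          (by simpa using hU₀)
      · exact (continuous_mul_left y⁻¹).continuousAt.preimage_mem_nhds
          (by simpa using hW₁)
    have := mem_closure_iff_nhds.1 (hd y) _ hmem
    obtain ⟨g, hg1, hg2⟩ := this
    exact ⟨g, hg2, hg1.1, hg1.2⟩
  obtain ⟨g, hgG, hgU, hgW⟩ := hgx
  obtain ⟨g', hg'G, hg'U, hg'W⟩ := hgy
  -- g⁻¹ * g' ∈ W
  have hgg' : g⁻¹ * g' ∈ W := by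
    have h1 : g⁻¹ * x ∈ V₁ := by
      have := hgW.2
      simpa using this
    have h2 : x⁻¹ * y ∈ V₁ := hxy.1
    have h3 : y⁻¹ * g' ∈ V₁ := hg'W.1
    have ha : (g⁻¹ * x) * (x⁻¹ * y) ∈ V₂ := hV₁' _ h1 _ h2
    have hb : y⁻¹ * g' ∈ V₂ := hV₁sub h3
    have := hV₂' _ ha _ hb
    simpa [mul_assoc] using this
  -- use hV' on the subgroup elements
  have key : |f g - f g'| < ε / 4 := by
    have : (⟨g, hgG⟩ : G)⁻¹ * (⟨g', hg'G⟩ : G) ∈ V := by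
      apply hWV
      simpa using hgg'
    exact hV' _ _ this
  have h1 : |f g - f x| < ε / 4 := hU₀' g x hgU
  have h2 : |f g' - f y| < ε / 4 := hU₀' g' y hg'U
  have habs : |f x - f y| ≤ |f g - f x| + |f g - f g'| + |f g' - f y| := by
    have := abs_sub_le (f x) (f g) (f y)
    have h' := abs_sub_le (f g) (f g') (f y)
    have e1 : |f x - f g| = |f g - f x| := abs_sub_comm _ _
    have e2 : |f g' - f y| = |f g' - f y| := rfl
    calc |f x - f y| ≤ |f x - f g| + |f g - f y| := abs_sub_le _ _ _
      _ ≤ |f x - f g| + (|f g - f g'| + |f g' - f y|) := by linarith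
      _ = |f g - f x| + |f g - f g'| + |f g' - f y| := by rw [e1]; ring
  linarith
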